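/- arXiv:2008.04026 — 2 statements merged into one kernel-verified Lean document; each statement's English description precedes it below -/
import Mathlib

section
/- In a multiplicative Hom-Jordan superalgebra (A,∘,α), the operator identity L(L(x,y)(z)) ∘ α² = L(α(x),α(y))L(z) - (-1)^{|z|(|x|+|y|)}L(α²(z))L(x,y) holds for all homogeneous x,y,z, where L(x)(w) = x∘w and L(x,y) = L(α(x))L(y) - (-1)^{|x||y|}L(α(y))L(x). -/
def sgn (K : Type*) [Field K] (i j : ZMod 2) : K := (-1 : K) ^ (i * j).val

def IsBilin (K : Type*) {A : Type*} [Field K] [AddCommGroup A] [Module K A]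
    (f : A → A → A) : Prop :=
  (∀ (c : K) (x y : A), f (c • x) y = c • f x y) ∧
  (∀ x x' y : A, f (x + x') y = f x y + f x' y) ∧
  (∀ (c : K) (x y : A), f x (c • y) = c • f x y) ∧
  (∀ x y y' : A, f x (y + y') = f x y + f x y')

def IsTrilin (K : Type*) {A : Type*} [Field K] [AddCommGroup A] [Module K A]
    (f : A → A → A → A) : Prop :=
  (∀ (c : K) (x y z : A), f (c • x) y z = c • f x y z) ∧
  (∀ x x' y z : A, f (x + x') y z = f x y z + f x' y z) ∧
  (∀ (c : K) (x y z : A), f x (c • y) z = c • f x y z) ∧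
  (∀ x y y' z : A, f x (y + y') z = f x y z + f x y' z) ∧
  (∀ (c : K) (x y z : A), f x y (c • z) = c • f x y z) ∧
  (∀ x y z z' : A, f x y (z + z') = f x y z + f x y z')

def asc {A : Type*} [AddCommGroup A] (mul : A → A → A) (x y z : A) : A :=
  mul (mul x y) z - mul x (mul y z)

def hasc {A : Type*} [AddCommGroup A] (mul : A → A → A) (α : A → A) (x y z : A) : A :=
  mul (mul x y) (α z) - mul (α x) (mul y z)

def br (K : Type*) {A : Type*} [Field K] [AddCommGroup A] [Module K A]
    (mul : A → A → A) (i j : ZMod 2) (x y : A) : A :=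
  (2 : K)⁻¹ • (mul x y - sgn K i j • mul y x)

def jp (K : Type*) {A : Type*} [Field K] [AddCommGroup A] [Module K A]
    (mul : A → A → A) (i j : ZMod 2) (x y : A) : A :=
  (2 : K)⁻¹ • (mul x y + sgn K i j • mul y x)

/- Auxiliary simp lemmas for evaluating `sgn` and `ZMod 2` arithmetic. -/
lemma zadd00 : ((0 : ZMod 2) + 0) = 0 := by decide
lemma zadd01 : ((0 : ZMod 2) + 1) = 1 := by decide
lemma zadd10 : ((1 : ZMod 2) + 0) = 1 := by decide
lemma zadd11 : ((1 : ZMod 2) + 1) = 0 := by decide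

lemma sgn00 {K : Type*} [Field K] : sgn K 0 0 = 1 := by
  rw [sgn, show (((0 : ZMod 2) * 0)).val = 0 by decide]; norm_num
lemma sgn01 {K : Type*} [Field K] : sgn K 0 1 = 1 := by
  rw [sgn, show (((0 : ZMod 2) * 1)).val = 0 by decide]; norm_num
lemma sgn10 {K : Type*} [Field K] : sgn K 1 0 = 1 := by
  rw [sgn, show (((1 : ZMod 2) * 0)).val = 0 by decide]; norm_num
lemma sgn11 {K : Type*} [Field K] : sgn K 1 1 = -1 := by
  rw [sgn, show (((1 : ZMod 2) * 1)).val = 1 by decide]; norm_num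

/-- The homogeneous case of the operator identity. -/
lemma stmt15_aux {K A : Type*} [Field K] [AddCommGroup A] [Module K A]
    (𝒜 : ZMod 2 → Submodule K A)
    (mul : A → A → A) (hbil : IsBilin K mul)
    (hgr : ∀ (i j : ZMod 2) (x y : A), x ∈ 𝒜 i → y ∈ 𝒜 j → mul x y ∈ 𝒜 (i + j))
    (α : A → A)
    (hαeven : ∀ (i : ZMod 2) (x : A), x ∈ 𝒜 i → α x ∈ 𝒜 i)
    (hαmul : ∀ x y : A, α (mul x y) = mul (α x) (α y))
    (hcomm : ∀ (i j : ZMod 2) (x y : A), x ∈ 𝒜 i → y ∈ 𝒜 j →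
      mul x y = sgn K i j • mul y x)
    (hjordan : ∀ (i j k l : ZMod 2) (x y z t : A),
      x ∈ 𝒜 i → y ∈ 𝒜 j → z ∈ 𝒜 k → t ∈ 𝒜 l →
      sgn K l (i + k) • hasc mul α (mul x y) (α z) (α t)
        + sgn K i (j + k) • hasc mul α (mul y t) (α z) (α x)
        + sgn K j (l + k) • hasc mul α (mul t x) (α z) (α y) = 0)
    (i j k l : ZMod 2) (x y z v : A)
    (hx : x ∈ 𝒜 i) (hy : y ∈ 𝒜 j) (hz : z ∈ 𝒜 k) (hv : v ∈ 𝒜 l) :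
    mul (mul (α x) (mul y z) - sgn K i j • mul (α y) (mul x z)) (α (α v))
      = mul (α (α x)) (mul (α y) (mul z v))
        - sgn K i j • mul (α (α y)) (mul (α x) (mul z v))
        - sgn K k (i + j) •
          mul (α (α z)) (mul (α x) (mul y v) - sgn K i j • mul (α y) (mul x v)) := by
  obtain ⟨hsl, hal, hsr, har⟩ := hbil
  have hnegl : ∀ b c : A, mul (-b) c = - mul b c := fun b c => by
    rw [← neg_one_smul K b, hsl, neg_one_smul]
  have hnegr : ∀ b c : A, mul b (-c) = - mul b c := fun b c => by
    rw [← neg_one_smul K c, hsr, neg_one_smul]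
  have hsubl : ∀ a b c : A, mul (a - b) c = mul a c - mul b c := fun a b c => by
    rw [sub_eq_add_neg, hal, hnegl, ← sub_eq_add_neg]
  have hsubr : ∀ a b c : A, mul a (b - c) = mul a b - mul a c := fun a b c => by
    rw [sub_eq_add_neg, har, hnegr, ← sub_eq_add_neg]
  -- memberships
  have mx1 : α x ∈ 𝒜 i := hαeven i x hx
  have mx2 : α (α x) ∈ 𝒜 i := hαeven i _ mx1
  have my1 : α y ∈ 𝒜 j := hαeven j y hy
  have my2 : α (α y) ∈ 𝒜 j := hαeven j _ my1
  have mz1 : α z ∈ 𝒜 k := hαeven k z hz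
  have mz2 : α (α z) ∈ 𝒜 k := hαeven k _ mz1
  have mv1 : α v ∈ 𝒜 l := hαeven l v hv
  -- commutativity flips
  have F1 : mul (α x) (mul y z) = sgn K i (j + k) • mul (mul y z) (α x) :=
    hcomm i (j + k) _ _ mx1 (hgr j k y z hy hz)
  have F2 : mul (α y) (mul x z) = sgn K j (i + k) • mul (mul x z) (α y) :=
    hcomm j (i + k) _ _ my1 (hgr i k x z hx hz)
  have F3 : mul (α y) (mul z v) = sgn K j (k + l) • mul (mul z v) (α y) :=
    hcomm j (k + l) _ _ my1 (hgr k l z v hz hv)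
  have F3' : mul (α (α x)) (mul (mul z v) (α y))
      = sgn K i (k + l + j) • mul (mul (mul z v) (α y)) (α (α x)) :=
    hcomm i (k + l + j) _ _ mx2 (hgr (k + l) j _ _ (hgr k l z v hz hv) my1)
  have F4 : mul (α x) (mul z v) = sgn K i (k + l) • mul (mul z v) (α x) :=
    hcomm i (k + l) _ _ mx1 (hgr k l z v hz hv)
  have F4' : mul (α (α y)) (mul (mul z v) (α x))
      = sgn K j (k + l + i) • mul (mul (mul z v) (α x)) (α (α y)) :=
    hcomm j (k + l + i) _ _ my2 (hgr (k + l) i _ _ (hgr k l z v hz hv) mx1)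
  have F5b : mul y v = sgn K j l • mul v y := hcomm j l y v hy hv
  have F5c : mul (α x) (mul v y) = sgn K i (l + j) • mul (mul v y) (α x) :=
    hcomm i (l + j) _ _ mx1 (hgr l j v y hv hy)
  have F5d : mul (α (α z)) (mul (mul v y) (α x))
      = sgn K k (l + j + i) • mul (mul (mul v y) (α x)) (α (α z)) :=
    hcomm k (l + j + i) _ _ mz2 (hgr (l + j) i _ _ (hgr l j v y hv hy) mx1)
  have F6b : mul x v = sgn K i l • mul v x := hcomm i l x v hx hv
  have F6c : mul (α y) (mul v x) = sgn K j (l + i) • mul (mul v x) (α y) :=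
    hcomm j (l + i) _ _ my1 (hgr l i v x hv hx)
  have F6d : mul (α (α z)) (mul (mul v x) (α y))
      = sgn K k (l + i + j) • mul (mul (mul v x) (α y)) (α (α z)) :=
    hcomm k (l + i + j) _ _ mz2 (hgr (l + i) j _ _ (hgr l i v x hv hx) my1)
  have G1 : mul (α v) (α y) = sgn K l j • mul (α y) (α v) := hcomm l j _ _ mv1 my1
  have G2 : mul (mul (α y) (α v)) (mul (α x) (α z))
      = sgn K (j + l) (i + k) • mul (mul (α x) (α z)) (mul (α y) (α v)) :=
    hcomm (j + l) (i + k) _ _ (hgr j l _ _ my1 mv1) (hgr i k _ _ mx1 mz1)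
  have G3 : mul (α y) (α x) = sgn K j i • mul (α x) (α y) := hcomm j i _ _ my1 mx1
  have G4 : mul (α v) (α x) = sgn K l i • mul (α x) (α v) := hcomm l i _ _ mv1 mx1
  have G5 : mul (mul (α x) (α v)) (mul (α y) (α z))
      = sgn K (i + l) (j + k) • mul (mul (α y) (α z)) (mul (α x) (α v)) :=
    hcomm (i + l) (j + k) _ _ (hgr i l _ _ mx1 mv1) (hgr j k _ _ my1 mz1)
  -- the two instances of the Jordan superidentity
  have h1 := hjordan j k i l y z x v hy hz hx hv
  have h2 := hjordan i k j l x z y v hx hz hy hv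
  simp only [hasc] at h1 h2
  rw [hαmul, hαmul, hαmul] at h1
  rw [hαmul, hαmul, hαmul] at h2
  rw [G1] at h1
  rw [G3, G4] at h2
  simp only [hsl, hsr] at h1 h2
  rw [G2] at h1
  rw [G5] at h2
  -- normalize the goal
  rw [hsubl, hsubr]
  simp only [hsl, hsr]
  rw [F1, F2, F3, F4, F5b, F6b]
  simp only [hsl, hsr]
  rw [F3', F4', F5c, F6c]
  simp only [hsl, hsr]
  rw [F5d, F6d]
  -- case analysis on the degrees
  have hcase : ∀ m : ZMod 2, m = 0 ∨ m = 1 := by decide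
  rcases hcase i with rfl | rfl <;> rcases hcase j with rfl | rfl <;>
    rcases hcase k with rfl | rfl <;> rcases hcase l with rfl | rfl <;>
    simp only [zadd00, zadd01, zadd10, zadd11, sgn00, sgn01, sgn10, sgn11,
      one_smul] at h1 h2 ⊢ <;>
    first
      | linear_combination (norm := module) h1 + h2
      | linear_combination (norm := module) h1 - h2
      | linear_combination (norm := module) h2 - h1
      | linear_combination (norm := module) -h1 - h2

/-- Lemma 7.3: the operator identity `L(L(x,y)(z)) ∘ α² = L(x,y,z)` in a
multiplicative Hom-Jordan superalgebra, evaluated at an arbitrary `v`. -/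
theorem stmt15 {K A : Type*} [Field K] [AddCommGroup A] [Module K A]
    (h2 : (2 : K) ≠ 0) (h3 : (3 : K) ≠ 0)
    (𝒜 : ZMod 2 → Submodule K A) (hds : DirectSum.IsInternal 𝒜)
    (mul : A → A → A) (hbil : IsBilin K mul)
    (hgr : ∀ (i j : ZMod 2) (x y : A), x ∈ 𝒜 i → y ∈ 𝒜 j → mul x y ∈ 𝒜 (i + j))
    (α : A → A)
    (hαsmul : ∀ (c : K) (x : A), α (c • x) = c • α x)
    (hαadd : ∀ x y : A, α (x + y) = α x + α y)
    (hαeven : ∀ (i : ZMod 2) (x : A), x ∈ 𝒜 i → α x ∈ 𝒜 i)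
    (hαmul : ∀ x y : A, α (mul x y) = mul (α x) (α y))
    (hcomm : ∀ (i j : ZMod 2) (x y : A), x ∈ 𝒜 i → y ∈ 𝒜 j →
      mul x y = sgn K i j • mul y x)
    (hjordan : ∀ (i j k l : ZMod 2) (x y z t : A),
      x ∈ 𝒜 i → y ∈ 𝒜 j → z ∈ 𝒜 k → t ∈ 𝒜 l →
      sgn K l (i + k) • hasc mul α (mul x y) (α z) (α t)
        + sgn K i (j + k) • hasc mul α (mul y t) (α z) (α x)
        + sgn K j (l + k) • hasc mul α (mul t x) (α z) (α y) = 0)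
    (i j k : ZMod 2) (x y z : A)
    (hx : x ∈ 𝒜 i) (hy : y ∈ 𝒜 j) (hz : z ∈ 𝒜 k) (v : A) :
    mul (mul (α x) (mul y z) - sgn K i j • mul (α y) (mul x z)) (α (α v))
      = mul (α (α x)) (mul (α y) (mul z v))
        - sgn K i j • mul (α (α y)) (mul (α x) (mul z v))
        - sgn K k (i + j) •
          mul (α (α z)) (mul (α x) (mul y v) - sgn K i j • mul (α y) (mul x v)) := by
  obtain ⟨hsl, hal, hsr, har⟩ := id hbil
  have hsubr : ∀ a b c : A, mul a (b - c) = mul a b - mul a c := fun a b c => by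
    rw [sub_eq_add_neg, har, ← neg_one_smul K c, hsr, neg_one_smul, ← sub_eq_add_neg]
  have hα0 : α 0 = 0 := by
    have := hαsmul 0 0; simpa using this
  have h0r : ∀ a : A, mul a 0 = 0 := fun a => by
    have := hsr 0 a 0; simpa using this
  have hv' : v ∈ ⨆ n, 𝒜 n := by
    rw [hds.submodule_iSup_eq_top]; trivial
  refine Submodule.iSup_induction 𝒜 (motive := fun w =>
    mul (mul (α x) (mul y z) - sgn K i j • mul (α y) (mul x z)) (α (α w))
      = mul (α (α x)) (mul (α y) (mul z w))
        - sgn K i j • mul (α (α y)) (mul (α x) (mul z w))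
        - sgn K k (i + j) •
          mul (α (α z)) (mul (α x) (mul y w) - sgn K i j • mul (α y) (mul x w)))
    hv' ?_ ?_ ?_
  · intro l w hw
    exact stmt15_aux 𝒜 mul hbil hgr α hαeven hαmul hcomm hjordan i j k l x y z w hx hy hz hw
  · simp only [hα0, h0r, smul_zero, sub_zero, sub_self]
  · intro a b Pa Pb
    simp only [hαadd, har, smul_add, hsubr, hsr] at Pa Pb ⊢
    linear_combination (norm := module) Pa + Pb
end

section
/- In a multiplicative right Hom-alternative superalgebra (A,*,α), with [x,y] = (1/2)(x*y - (-1)^{|x||y|}y*x), super-Jordan product ∘, ⟨x,y,z⟩ = (x∘y)∘α(z) + α(x)∘(y∘z) - (-1)^{|x||y|}α(y)∘(x∘z), and [x,y,z] := ⟨x,y,z⟩ - (-1)^{|x||y|}⟨y,x,z⟩, the identity [x,y,z] = 2[[x,y],α(z)] - (-1)^{|z|(|x|+|y|)}((z*x)*α(y) - α(z)*(x*y)) holds for all homogeneous x,y,z. -/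
/-- The triple product `⟨x,y,z⟩ = (x∘y)∘α(z) + α(x)∘(y∘z) - (-1)^{|x||y|}α(y)∘(x∘z)`
built from the super-Jordan product `∘`, for homogeneous `x,y,z` of degrees `i,j,k`. -/
def hTj (K : Type*) {A : Type*} [Field K] [AddCommGroup A] [Module K A]
    (mul : A → A → A) (α : A → A) (i j k : ZMod 2) (x y z : A) : A :=
  jp K mul (i + j) k (jp K mul i j x y) (α z)
    + jp K mul i (j + k) (α x) (jp K mul j k y z)
    - sgn K i j • jp K mul j (i + k) (α y) (jp K mul i k x z)

/-- The Hom-Bol ternary operation `{x,y,z} = (1/2)(⟨x,y,z⟩ - (-1)^{|x||y|}⟨y,x,z⟩)`. -/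
def tbh (K : Type*) {A : Type*} [Field K] [AddCommGroup A] [Module K A]
    (mul : A → A → A) (α : A → A) (i j k : ZMod 2) (x y z : A) : A :=
  (2 : K)⁻¹ • (hTj K mul α i j k x y z - sgn K i j • hTj K mul α j i k y x z)


lemma sgn_comm' (K : Type*) [Field K] (a b : ZMod 2) : sgn K a b = sgn K b a := by
  rw [sgn, sgn, mul_comm]

lemma sgn_mul_self (K : Type*) [Field K] (a b : ZMod 2) :
    sgn K a b * sgn K a b = 1 := by
  rw [sgn, ← pow_add]; exact Even.neg_one_pow ⟨_, rfl⟩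

lemma sgn_add_left' (K : Type*) [Field K] (a b c : ZMod 2) :
    sgn K (a + b) c = sgn K a c * sgn K b c := by
  have h2 : ∀ u : ZMod 2, u = 0 ∨ u = 1 := by decide
  rcases h2 a with rfl|rfl <;> rcases h2 b with rfl|rfl <;> rcases h2 c with rfl|rfl <;>
    simp [sgn, show ((1 : ZMod 2)).val = 1 from rfl, show ((0 : ZMod 2) + 1) = 1 from rfl,
      show ((1 : ZMod 2) + 1) = 0 from rfl]

lemma sgn_add_right' (K : Type*) [Field K] (a b c : ZMod 2) :
    sgn K a (b + c) = sgn K a b * sgn K a c := by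
  rw [sgn_comm', sgn_add_left', sgn_comm' K b a, sgn_comm' K c a]

set_option maxHeartbeats 2000000 in
/-- Identity (7.10): -/
theorem stmt18 {K A : Type*} [Field K] [AddCommGroup A] [Module K A]
    (h2 : (2 : K) ≠ 0) (h3 : (3 : K) ≠ 0)
    (𝒜 : ZMod 2 → Submodule K A) (hds : DirectSum.IsInternal 𝒜)
    (mul : A → A → A) (hbil : IsBilin K mul)
    (hgr : ∀ (i j : ZMod 2) (x y : A), x ∈ 𝒜 i → y ∈ 𝒜 j → mul x y ∈ 𝒜 (i + j))
    (α : A → A)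
    (hαsmul : ∀ (c : K) (x : A), α (c • x) = c • α x)
    (hαadd : ∀ x y : A, α (x + y) = α x + α y)
    (hαeven : ∀ (i : ZMod 2) (x : A), x ∈ 𝒜 i → α x ∈ 𝒜 i)
    (hαmul : ∀ x y : A, α (mul x y) = mul (α x) (α y))
    (halt : ∀ (i j k : ZMod 2) (x y z : A), x ∈ 𝒜 i → y ∈ 𝒜 j → z ∈ 𝒜 k →
      hasc mul α x y z = (-(sgn K j k)) • hasc mul α x z y)
    (i j k : ZMod 2) (x y z : A)
    (hx : x ∈ 𝒜 i) (hy : y ∈ 𝒜 j) (hz : z ∈ 𝒜 k) :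
    hTj K mul α i j k x y z - sgn K i j • hTj K mul α j i k y x z
      = (2 : K) • br K mul (i + j) k (br K mul i j x y) (α z)
        - sgn K k (i + j) • (mul (mul z x) (α y) - mul (α z) (mul x y)) := by
  obtain ⟨hsl, hal, hsr, har⟩ := hbil
  have e1 := halt i j k x y z hx hy hz
  have e2 := halt j i k y x z hy hx hz
  have e3 := halt k i j z x y hz hx hy
  have hp := sgn_mul_self K i j
  have hq := sgn_mul_self K j k
  have hr := sgn_mul_self K i k
  have hnl : ∀ a b : A, mul (-a) b = -mul a b := fun a b => by
    rw [← neg_one_smul K a, hsl, neg_one_smul]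
  have hnr : ∀ a b : A, mul a (-b) = -mul a b := fun a b => by
    rw [← neg_one_smul K b, hsr, neg_one_smul]
  have hsubl : ∀ a b c : A, mul (a - b) c = mul a c - mul b c := fun a b c => by
    rw [sub_eq_add_neg, hal, hnl, ← sub_eq_add_neg]
  have hsubr : ∀ a b c : A, mul a (b - c) = mul a b - mul a c := fun a b c => by
    rw [sub_eq_add_neg, har, hnr, ← sub_eq_add_neg]
  simp only [hasc] at e1 e2 e3
  simp only [hTj, jp, br, sgn_add_left', sgn_add_right', sgn_comm' K j i,
    sgn_comm' K k i, sgn_comm' K k j, hsl, hal, hsr, har, hsubl, hsubr, hnl, hnr]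
  linear_combination (norm :=
      (match_scalars <;>
        (rcases mul_self_eq_one_iff.mp hp with h|h <;>
          rcases mul_self_eq_one_iff.mp hq with h'|h' <;>
            rcases mul_self_eq_one_iff.mp hr with h''|h'' <;>
              simp only [h, h', h''] <;> field_simp <;> ring1)))
    (-(2:K)⁻¹) • e1 + ((2:K)⁻¹ * sgn K i j) • e2
      + ((2:K)⁻¹ * sgn K j k * sgn K i k) • e3
end
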